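/- arXiv:2410.08298 — 3 statements merged into one kernel-verified Lean document; each statement's English description precedes it below -/
import Mathlib

section
/- (Theorem 1 of the paper.) Consider δx_{k+1} = A δx_k + B_p p_k + B_w w_k where p_k satisfies the quadratic constraint [δx_k; p_k]ᵀ M [δx_k; p_k] ≥ 0 almost surely, w_k is zero-mean with covariance Q and uncorrelated with δx_k and p_k. If there exist symmetric Z, Y ∈ S^n and ξ ≥ 0 with Z − Y ⪯ 0 and [[Aᵀ(Z−Y)A, AᵀZB_p],[B_pᵀZA, B_pᵀZB_p]] + ξ M ⪯ 0, then tr(P⁻_{k+1} Z) ≤ tr(B_w Q B_wᵀ Z) + tr(A P⁺_k Aᵀ Y), where P⁻_{k+1} = 𝔼[δx_{k+1} δx_{k+1}ᵀ] and P⁺_k = 𝔼[δx_k δx_kᵀ]. -/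
open Matrix MeasureTheory

def Matrix.NegSemidef' {k : Type*} [Fintype k] (N : Matrix k k ℝ) : Prop :=
  (-N).PosSemidef

/-- Uncentered second-moment (cross-moment) matrix `𝔼[x yᵀ]`. -/
noncomputable def secondMoment {Ω : Type*} [MeasureSpace Ω] {n m : ℕ}
    (x : Ω → Fin n → ℝ) (y : Ω → Fin m → ℝ) : Matrix (Fin n) (Fin m) ℝ :=
  Matrix.of fun i j => ∫ ω, x ω i * y ω j

lemma dot_mulVec_eq_sum {ι κ : Type*} [Fintype ι] [Fintype κ]
    (N : Matrix κ ι ℝ) (x : ι → ℝ) (y : κ → ℝ) :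
    y ⬝ᵥ (N *ᵥ x) = ∑ j, ∑ i, N j i * (x i * y j) := by
  simp only [dotProduct, mulVec, Finset.mul_sum]
  exact Finset.sum_congr rfl fun j _ => Finset.sum_congr rfl fun i _ => by ring

lemma integrable_bilin {Ω : Type*} [MeasureSpace Ω] {ι κ : Type*} [Fintype ι] [Fintype κ]
    {x : Ω → ι → ℝ} {y : Ω → κ → ℝ}
    (h : ∀ i j, Integrable fun ω => x ω i * y ω j) (N : Matrix κ ι ℝ) :
    Integrable fun ω => y ω ⬝ᵥ (N *ᵥ x ω) := by
  simp_rw [dot_mulVec_eq_sum]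
  exact integrable_finset_sum _ fun j _ => integrable_finset_sum _ fun i _ => (h i j).const_mul _

lemma integral_bilin {Ω : Type*} [MeasureSpace Ω] {ι κ : Type*} [Fintype ι] [Fintype κ]
    {x : Ω → ι → ℝ} {y : Ω → κ → ℝ}
    (h : ∀ i j, Integrable fun ω => x ω i * y ω j) (N : Matrix κ ι ℝ) :
    ∫ ω, y ω ⬝ᵥ (N *ᵥ x ω) = ∑ j, ∑ i, N j i * ∫ ω, x ω i * y ω j := by
  simp_rw [dot_mulVec_eq_sum]
  refine (integral_finset_sum _ fun j _ =>
    integrable_finset_sum _ fun i _ => (h i j).const_mul _).trans ?_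
  refine Finset.sum_congr rfl fun j _ => ?_
  refine (integral_finset_sum _ fun i _ => (h i j).const_mul _).trans ?_
  exact Finset.sum_congr rfl fun i _ => integral_const_mul _ _

lemma conj_dot {ι κ ν : Type*} [Fintype ι] [Fintype κ] [Fintype ν]
    (A : Matrix ν ι ℝ) (B : Matrix ν κ ℝ) (N : Matrix ν ν ℝ) (x : ι → ℝ) (y : κ → ℝ) :
    x ⬝ᵥ ((Aᵀ * N * B) *ᵥ y) = (A *ᵥ x) ⬝ᵥ (N *ᵥ (B *ᵥ y)) := by
  simp only [Matrix.dotProduct_mulVec, ← Matrix.vecMul_vecMul, Matrix.vecMul_transpose]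

lemma trace_mul_eq_sum {ι : Type*} [Fintype ι] (P N : Matrix ι ι ℝ) :
    (P * N).trace = ∑ j, ∑ i, N j i * P i j := by
  rw [Finset.sum_comm]
  simp only [Matrix.trace, Matrix.diag, Matrix.mul_apply]
  exact Finset.sum_congr rfl fun i _ => Finset.sum_congr rfl fun j _ => mul_comm _ _

lemma integrable_mul_comm {Ω : Type*} [MeasureSpace Ω] {f g : Ω → ℝ}
    (h : Integrable fun ω => f ω * g ω) : Integrable fun ω => g ω * f ω := by
  have e : (fun ω => g ω * f ω) = fun ω => f ω * g ω := funext fun ω => mul_comm _ _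
  rw [e]; exact h

lemma integrable_mulVec_mul_mulVec {Ω : Type*} [MeasureSpace Ω]
    {ι κ ν₁ ν₂ : Type*} [Fintype ι] [Fintype κ] [Fintype ν₁] [Fintype ν₂]
    {x : Ω → ι → ℝ} {y : Ω → κ → ℝ}
    (h : ∀ i j, Integrable fun ω => x ω i * y ω j)
    (P : Matrix ν₁ ι ℝ) (R : Matrix ν₂ κ ℝ) (a : ν₁) (b : ν₂) :
    Integrable fun ω => (P *ᵥ x ω) a * (R *ᵥ y ω) b := by
  simp only [mulVec, dotProduct, Finset.sum_mul_sum]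
  refine integrable_finset_sum _ fun i _ => integrable_finset_sum _ fun j _ => ?_
  have e : (fun ω => P a i * x ω i * (R b j * y ω j))
      = fun ω => (P a i * R b j) * (x ω i * y ω j) := funext fun ω => by ring
  rw [e]; exact (h i j).const_mul _

/-- Theorem 1 of the paper: if `Z − Y ⪯ 0` and the block LMI holds,
then `tr(P⁻_{k+1} Z) ≤ tr(B_w Q B_wᵀ Z) + tr(A P⁺_k Aᵀ Y)`. -/
theorem stmt_5 {Ω : Type*} [MeasureSpace Ω] [IsProbabilityMeasure (volume : Measure Ω)]
    (n m nw : ℕ)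
    (δx : Ω → Fin n → ℝ) (p : Ω → Fin m → ℝ) (w : Ω → Fin nw → ℝ)
    (hxx : ∀ i j, Integrable fun ω => δx ω i * δx ω j)
    (hpp : ∀ i j, Integrable fun ω => p ω i * p ω j)
    (hww : ∀ i j, Integrable fun ω => w ω i * w ω j)
    (hxp : ∀ i j, Integrable fun ω => δx ω i * p ω j)
    (hxw : ∀ i j, Integrable fun ω => δx ω i * w ω j)
    (hpw : ∀ i j, Integrable fun ω => p ω i * w ω j)
    (hwmean : ∀ i, ∫ ω, w ω i = 0)
    (huncorr_wx : secondMoment w δx = 0)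
    (huncorr_wp : secondMoment w p = 0)
    (Q : Matrix (Fin nw) (Fin nw) ℝ) (hQ : secondMoment w w = Q)
    (A : Matrix (Fin n) (Fin n) ℝ)
    (Bp : Matrix (Fin n) (Fin m) ℝ) (Bw : Matrix (Fin n) (Fin nw) ℝ)
    (M : Matrix (Fin n ⊕ Fin m) (Fin n ⊕ Fin m) ℝ) (hM : M.IsSymm)
    (hQC : ∀ᵐ ω ∂(volume : Measure Ω),
      0 ≤ Sum.elim (δx ω) (p ω) ⬝ᵥ (M *ᵥ Sum.elim (δx ω) (p ω)))
    (δx' : Ω → Fin n → ℝ)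
    (hδx' : ∀ ω, δx' ω = A *ᵥ δx ω + Bp *ᵥ p ω + Bw *ᵥ w ω)
    (Z Y : Matrix (Fin n) (Fin n) ℝ) (hZsym : Z.IsSymm) (hYsym : Y.IsSymm)
    (ξ : ℝ) (hξ : 0 ≤ ξ)
    (hZY : (Z - Y).NegSemidef')
    (hLMI : (Matrix.fromBlocks (Aᵀ * (Z - Y) * A) (Aᵀ * Z * Bp)
        (Bpᵀ * Z * A) (Bpᵀ * Z * Bp) + ξ • M).NegSemidef') :
    (secondMoment δx' δx' * Z).trace ≤
      (Bw * Q * Bwᵀ * Z).trace + (A * secondMoment δx δx * Aᵀ * Y).trace := by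
  classical
  set S : Ω → (Fin n ⊕ Fin m) → ℝ := fun ω => Sum.elim (δx ω) (p ω) with hS
  set G : Matrix (Fin n) (Fin n ⊕ Fin m) ℝ := Matrix.fromCols A Bp with hG
  -- basic integrabilities
  have hSS : ∀ i j, Integrable fun ω => S ω i * S ω j := by
    rintro (i | i) (j | j)
    · exact hxx i j
    · exact hxp i j
    · exact integrable_mul_comm (hxp j i)
    · exact hpp i j
  have hSw : ∀ i j, Integrable fun ω => S ω i * w ω j := by
    rintro (i | i) j
    · exact hxw i j
    · exact hpw i j
  have hwS : ∀ i j, Integrable fun ω => w ω i * S ω j := fun i j => integrable_mul_comm (hSw j i)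
  -- vanishing cross moments
  have hwS0 : ∀ i j, (∫ ω, w ω i * S ω j) = 0 := by
    rintro i (j | j)
    · simpa [secondMoment, hS] using congrFun (congrFun huncorr_wx i) j
    · simpa [secondMoment, hS] using congrFun (congrFun huncorr_wp i) j
  have hSw0 : ∀ i j, (∫ ω, S ω i * w ω j) = 0 := by
    intro i j
    have e : (fun ω => S ω i * w ω j) = fun ω => w ω j * S ω i := funext fun ω => mul_comm _ _
    rw [e]; exact hwS0 j i
  -- δx' as a linear image
  have hδx'2 : ∀ ω, δx' ω = G *ᵥ S ω + Bw *ᵥ w ω := by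
    intro ω
    rw [hδx' ω, hS, hG, Matrix.fromCols_mulVec_sumElim]
  -- integrability of products of δx'
  have hx'x' : ∀ i j, Integrable fun ω => δx' ω i * δx' ω j := by
    intro i j
    have e : (fun ω => δx' ω i * δx' ω j) = fun ω =>
        (G *ᵥ S ω) i * (G *ᵥ S ω) j + (G *ᵥ S ω) i * (Bw *ᵥ w ω) j
        + (Bw *ᵥ w ω) i * (G *ᵥ S ω) j + (Bw *ᵥ w ω) i * (Bw *ᵥ w ω) j := by
      funext ω; rw [hδx'2 ω]; simp [Pi.add_apply]; ring
    rw [e]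
    exact (((integrable_mulVec_mul_mulVec hSS G G i j).add
      (integrable_mulVec_mul_mulVec hSw G Bw i j)).add
      (integrable_mulVec_mul_mulVec hwS Bw G i j)).add
      (integrable_mulVec_mul_mulVec hww Bw Bw i j)
  -- the four quadratic pieces
  set f1 : Ω → ℝ := fun ω => S ω ⬝ᵥ ((Gᵀ * Z * G) *ᵥ S ω) with hf1
  set f2 : Ω → ℝ := fun ω => S ω ⬝ᵥ ((Gᵀ * Z * Bw) *ᵥ w ω) with hf2
  set f3 : Ω → ℝ := fun ω => w ω ⬝ᵥ ((Bwᵀ * Z * G) *ᵥ S ω) with hf3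
  set f4 : Ω → ℝ := fun ω => w ω ⬝ᵥ ((Bwᵀ * Z * Bw) *ᵥ w ω) with hf4
  have if1 : Integrable f1 := integrable_bilin hSS _
  have if2 : Integrable f2 := integrable_bilin hwS _
  have if3 : Integrable f3 := integrable_bilin hSw _
  have if4 : Integrable f4 := integrable_bilin hww _
  -- pointwise decomposition
  have hpt : ∀ ω, δx' ω ⬝ᵥ (Z *ᵥ δx' ω) = f1 ω + f2 ω + f3 ω + f4 ω := by
    intro ω
    rw [hδx'2 ω]
    simp only [hf1, hf2, hf3, hf4, conj_dot, Matrix.mulVec_add, dotProduct_add,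
      add_dotProduct]
    ring
  -- LHS as an integral
  have hLHS : (secondMoment δx' δx' * Z).trace = ∫ ω, δx' ω ⬝ᵥ (Z *ᵥ δx' ω) := by
    rw [trace_mul_eq_sum, integral_bilin hx'x' Z]
    rfl
  have hsplit : ∫ ω, δx' ω ⬝ᵥ (Z *ᵥ δx' ω)
      = (∫ ω, f1 ω) + (∫ ω, f2 ω) + (∫ ω, f3 ω) + (∫ ω, f4 ω) := by
    rw [show (fun ω => δx' ω ⬝ᵥ (Z *ᵥ δx' ω)) = fun ω => f1 ω + f2 ω + f3 ω + f4 ω from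
      funext hpt]
    have h12 : (∫ ω, f1 ω + f2 ω) = (∫ ω, f1 ω) + ∫ ω, f2 ω := integral_add if1 if2
    have h123 : (∫ ω, f1 ω + f2 ω + f3 ω) = (∫ ω, f1 ω + f2 ω) + ∫ ω, f3 ω :=
      integral_add (if1.add if2) if3
    have h1234 : (∫ ω, f1 ω + f2 ω + f3 ω + f4 ω)
        = (∫ ω, f1 ω + f2 ω + f3 ω) + ∫ ω, f4 ω :=
      integral_add ((if1.add if2).add if3) if4
    rw [h1234, h123, h12]
  -- cross terms vanish
  have hI2 : (∫ ω, f2 ω) = 0 := by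
    rw [hf2, integral_bilin hwS (Gᵀ * Z * Bw)]
    simp only [hwS0]
    simp
  have hI3 : (∫ ω, f3 ω) = 0 := by
    rw [hf3, integral_bilin hSw (Bwᵀ * Z * G)]
    simp only [hSw0]
    simp
  -- noise term equals first trace
  have hI4 : (∫ ω, f4 ω) = (Bw * Q * Bwᵀ * Z).trace := by
    rw [hf4, integral_bilin hww (Bwᵀ * Z * Bw)]
    have hQe : ∀ i j, (∫ ω, w ω i * w ω j) = Q i j := fun i j => by
      simpa [secondMoment] using congrFun (congrFun hQ i) j
    simp only [hQe]
    have ht : (Bw * Q * Bwᵀ * Z).trace = (Q * (Bwᵀ * Z * Bw)).trace := by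
      calc (Bw * Q * Bwᵀ * Z).trace = (Bw * (Q * (Bwᵀ * Z))).trace := by
            rw [Matrix.mul_assoc, Matrix.mul_assoc]
        _ = ((Q * (Bwᵀ * Z)) * Bw).trace := Matrix.trace_mul_comm _ _
        _ = (Q * (Bwᵀ * Z * Bw)).trace := by rw [Matrix.mul_assoc]
    rw [ht, trace_mul_eq_sum]
  -- block structure of GᵀZG
  have hGZG : Gᵀ * Z * G = Matrix.fromBlocks (Aᵀ * Z * A) (Aᵀ * Z * Bp)
      (Bpᵀ * Z * A) (Bpᵀ * Z * Bp) := by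
    rw [hG, Matrix.transpose_fromCols, Matrix.fromRows_mul, Matrix.fromRows_mul_fromCols]
  -- core pointwise inequality
  have hmono : (∫ ω, f1 ω) ≤ ∫ ω, δx ω ⬝ᵥ ((Aᵀ * Y * A) *ᵥ δx ω) := by
    refine integral_mono_ae if1 (integrable_bilin hxx _) ?_
    filter_upwards [hQC] with ω hω
    have h0 := hLMI.dotProduct_mulVec_nonneg (S ω)
    simp only [star_trivial, Matrix.neg_mulVec, dotProduct_neg] at h0
    have h1 : S ω ⬝ᵥ ((Matrix.fromBlocks (Aᵀ * (Z - Y) * A) (Aᵀ * Z * Bp)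
        (Bpᵀ * Z * A) (Bpᵀ * Z * Bp) + ξ • M) *ᵥ S ω) ≤ 0 := by linarith
    have h2 : S ω ⬝ᵥ ((Matrix.fromBlocks (Aᵀ * (Z - Y) * A) (Aᵀ * Z * Bp)
        (Bpᵀ * Z * A) (Bpᵀ * Z * Bp)) *ᵥ S ω) ≤ 0 := by
      have hsm : S ω ⬝ᵥ ((ξ • M) *ᵥ S ω) = ξ * (S ω ⬝ᵥ (M *ᵥ S ω)) := by
        rw [Matrix.smul_mulVec, dotProduct_smul]; rfl
      have := mul_nonneg hξ hω
      simp only [Matrix.add_mulVec, dotProduct_add, hsm] at h1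
      linarith
    -- identity : block quadratic form = f1 - quadratic form in Y
    have hid : S ω ⬝ᵥ ((Matrix.fromBlocks (Aᵀ * (Z - Y) * A) (Aᵀ * Z * Bp)
        (Bpᵀ * Z * A) (Bpᵀ * Z * Bp)) *ᵥ S ω)
        = f1 ω - δx ω ⬝ᵥ ((Aᵀ * Y * A) *ᵥ δx ω) := by
      have hsub : Aᵀ * (Z - Y) * A = Aᵀ * Z * A - Aᵀ * Y * A := by
        rw [mul_sub, sub_mul]
      rw [hf1, hGZG, hsub, hS]
      simp only [Matrix.fromBlocks_mulVec, sumElim_dotProduct_sumElim,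
        dotProduct_add, Matrix.sub_mulVec, dotProduct_sub,
        Sum.elim_comp_inl, Sum.elim_comp_inr]
      ring
    linarith [hid ▸ h2]
  -- second trace
  have hI5 : (∫ ω, δx ω ⬝ᵥ ((Aᵀ * Y * A) *ᵥ δx ω)) = (A * secondMoment δx δx * Aᵀ * Y).trace := by
    rw [integral_bilin hxx (Aᵀ * Y * A)]
    have ht : (A * secondMoment δx δx * Aᵀ * Y).trace
        = (secondMoment δx δx * (Aᵀ * Y * A)).trace := by
      calc (A * secondMoment δx δx * Aᵀ * Y).trace
          = (A * (secondMoment δx δx * (Aᵀ * Y))).trace := by rw [Matrix.mul_assoc, Matrix.mul_assoc]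
        _ = ((secondMoment δx δx * (Aᵀ * Y)) * A).trace := Matrix.trace_mul_comm _ _
        _ = (secondMoment δx δx * (Aᵀ * Y * A)).trace := by rw [Matrix.mul_assoc]
    rw [ht, trace_mul_eq_sum]
    rfl
  rw [hLHS, hsplit, hI2, hI3, hI4]
  linarith [hmono, hI5.symm.le, hI5.le]
end

section
/- Let x ∈ ℝⁿ, ρ ∈ ℝᵐ, v ∈ ℝᵖ, and matrices H ∈ ℝ^{q×n}, K ∈ ℝ^{n×q}, B_ρ ∈ ℝ^{q×m}, B_v ∈ ℝ^{q×p}, Z, Y ∈ S^n, ξ ≥ 0, M ∈ S^{n+m}. Suppose [[−Y, HᵀKᵀZKB_ρ − ZKB_ρ],[ (HᵀKᵀZKB_ρ − ZKB_ρ)ᵀ, B_ρᵀKᵀZKB_ρ]] + ξ M ⪯ 0 and [x; ρ]ᵀ M [x; ρ] ≥ 0. Let e = x − K(H x + B_ρ ρ + B_v v). Then eᵀ Z e ≤ xᵀ (I − KH)ᵀ Z (I − KH) x + xᵀ Y x + (cross and quadratic terms in v): eᵀ Z e ≤ xᵀ(I−KH)ᵀZ(I−KH)x + xᵀYx − 2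 xᵀ(I−KH)ᵀ Z K B_v v + 2 ρᵀ B_ρᵀ Kᵀ Z K B_v v + vᵀ B_vᵀ Kᵀ Z K B_v v. -/
open Matrix

private lemma dot_transpose {a b : ℕ} (A : Matrix (Fin b) (Fin a) ℝ)
    (u : Fin a → ℝ) (w : Fin b → ℝ) : u ⬝ᵥ (Aᵀ *ᵥ w) = (A *ᵥ u) ⬝ᵥ w := by
  rw [Matrix.mulVec_transpose, dotProduct_comm (A *ᵥ u) w, Matrix.dotProduct_mulVec]
  exact dotProduct_comm _ _

/-- deterministic pointwise inequality underlying Theorem 2. -/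
theorem stmt_7 (n m p q : ℕ)
    (x : Fin n → ℝ) (ρ : Fin m → ℝ) (v : Fin p → ℝ)
    (H : Matrix (Fin q) (Fin n) ℝ) (K : Matrix (Fin n) (Fin q) ℝ)
    (Bρ : Matrix (Fin q) (Fin m) ℝ) (Bv : Matrix (Fin q) (Fin p) ℝ)
    (Z Y : Matrix (Fin n) (Fin n) ℝ) (hZ : Z.IsSymm) (hY : Y.IsSymm)
    (ξ : ℝ) (hξ : 0 ≤ ξ)
    (M : Matrix (Fin n ⊕ Fin m) (Fin n ⊕ Fin m) ℝ) (hM : M.IsSymm)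
    (hLMI : (Matrix.fromBlocks (-Y) (Hᵀ * Kᵀ * Z * K * Bρ - Z * K * Bρ)
        (Hᵀ * Kᵀ * Z * K * Bρ - Z * K * Bρ)ᵀ (Bρᵀ * Kᵀ * Z * K * Bρ)
        + ξ • M).NegSemidef')
    (hQC : 0 ≤ Sum.elim x ρ ⬝ᵥ (M *ᵥ Sum.elim x ρ)) :
    (x - K *ᵥ (H *ᵥ x + Bρ *ᵥ ρ + Bv *ᵥ v)) ⬝ᵥ
        (Z *ᵥ (x - K *ᵥ (H *ᵥ x + Bρ *ᵥ ρ + Bv *ᵥ v))) ≤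
      x ⬝ᵥ (((1 - K * H)ᵀ * Z * (1 - K * H)) *ᵥ x) + x ⬝ᵥ (Y *ᵥ x) -
        2 * (x ⬝ᵥ (((1 - K * H)ᵀ * Z * K * Bv) *ᵥ v)) +
        2 * (ρ ⬝ᵥ ((Bρᵀ * Kᵀ * Z * K * Bv) *ᵥ v)) +
        v ⬝ᵥ ((Bvᵀ * Kᵀ * Z * K * Bv) *ᵥ v) := by
  set z : (Fin n ⊕ Fin m) → ℝ := Sum.elim x ρ with hz
  set N : Matrix (Fin n ⊕ Fin m) (Fin n ⊕ Fin m) ℝ :=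
    Matrix.fromBlocks (-Y) (Hᵀ * Kᵀ * Z * K * Bρ - Z * K * Bρ)
      (Hᵀ * Kᵀ * Z * K * Bρ - Z * K * Bρ)ᵀ (Bρᵀ * Kᵀ * Z * K * Bρ) with hN
  have h1 : 0 ≤ z ⬝ᵥ ((-(N + ξ • M)) *ᵥ z) := by
    have := hLMI.dotProduct_mulVec_nonneg z
    simpa using this
  have hNz : z ⬝ᵥ (N *ᵥ z) ≤ 0 := by
    have h2 : z ⬝ᵥ ((-(N + ξ • M)) *ᵥ z)
        = -(z ⬝ᵥ (N *ᵥ z)) - ξ * (z ⬝ᵥ (M *ᵥ z)) := by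
      simp [Matrix.neg_mulVec, Matrix.add_mulVec, Matrix.smul_mulVec,
        dotProduct_add, dotProduct_neg, dotProduct_smul, smul_eq_mul]
      ring
    nlinarith [mul_nonneg hξ hQC]
  -- expand the block quadratic form
  have hkey : x ⬝ᵥ ((-Y) *ᵥ x) + x ⬝ᵥ ((Hᵀ * Kᵀ * Z * K * Bρ - Z * K * Bρ) *ᵥ ρ)
      + ρ ⬝ᵥ ((Hᵀ * Kᵀ * Z * K * Bρ - Z * K * Bρ)ᵀ *ᵥ x)
      + ρ ⬝ᵥ ((Bρᵀ * Kᵀ * Z * K * Bρ) *ᵥ ρ) ≤ 0 := by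
    have : z ⬝ᵥ (N *ᵥ z)
        = x ⬝ᵥ ((-Y) *ᵥ x) + x ⬝ᵥ ((Hᵀ * Kᵀ * Z * K * Bρ - Z * K * Bρ) *ᵥ ρ)
          + ρ ⬝ᵥ ((Hᵀ * Kᵀ * Z * K * Bρ - Z * K * Bρ)ᵀ *ᵥ x)
          + ρ ⬝ᵥ ((Bρᵀ * Kᵀ * Z * K * Bρ) *ᵥ ρ) := by
      rw [hN, Matrix.fromBlocks_mulVec, hz, Matrix.dotProduct_block]
      simp [dotProduct_add]
      ring
    linarith [this ▸ hNz]
  -- symmetry of the Z-bilinear form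
  have hs : ∀ u w : Fin n → ℝ, u ⬝ᵥ (Z *ᵥ w) = w ⬝ᵥ (Z *ᵥ u) := by
    intro u w
    rw [dotProduct_comm, Matrix.dotProduct_mulVec, ← Matrix.vecMul_transpose, hZ.eq]
  set khx := K *ᵥ (H *ᵥ x) with hkhx
  set kbρ := K *ᵥ (Bρ *ᵥ ρ) with hkbρ
  set kbv := K *ᵥ (Bv *ᵥ v) with hkbv
  -- reduce everything to dot products among x, khx, kbρ, kbv
  simp only [← Matrix.mulVec_mulVec, Matrix.transpose_mul, Matrix.transpose_sub,
    Matrix.transpose_one, Matrix.sub_mulVec, Matrix.mulVec_add, Matrix.one_mulVec,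
    dotProduct_sub, sub_dotProduct, dotProduct_add, add_dotProduct,
    dot_transpose, Matrix.transpose_transpose, Matrix.mulVec_sub,
    ← hkhx, ← hkbρ, ← hkbv] at hkey ⊢
  have hnegY : x ⬝ᵥ (-Y) *ᵥ x = -(x ⬝ᵥ Y *ᵥ x) := by
    simp [Matrix.neg_mulVec]
  linarith [hs x khx, hs x kbρ, hs x kbv, hs khx kbρ, hs khx kbv, hs kbρ kbv, hkey,
    hnegY, dotProduct_comm (Z *ᵥ kbρ) khx, dotProduct_comm (Z *ᵥ kbρ) x]
end

section
/- (Theorem 2 of the paper.) Consider the measurement update e_k = δx_k − K(H δx_k + B_ρ ρ_k + B_v v_k), where ρ_k satisfies the quadratic constraint [δx_k; ρ_k]ᵀ M [δx_k; ρ_k] ≥ 0 almost surely, v_k has second-moment matrix R and is uncorrelated with δx_k and ρ_k. If there exist symmetric Z, Y ∈ S^n and ξ ≥ 0 with [[−Y, HᵀKᵀZKB_ρ − ZKB_ρ],[*, B_ρᵀKᵀZKB_ρ]] + ξ M ⪯ 0, then tr(P⁺ Z) ≤ tr(P⁻ (I − KH)ᵀ Z (I − KH)) + tr(K B_v R B_vᵀ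 Kᵀ Z) + tr(P⁻ Y), where P⁺ = 𝔼[e_k e_kᵀ] and P⁻ = 𝔼[δx_k δx_kᵀ]. -/
open Matrix MeasureTheory

section helpers
variable {Ω : Type*} [MeasureSpace Ω] {a b : ℕ}

lemma pointwise_quad (x : Fin a → ℝ) (y : Fin b → ℝ) (C : Matrix (Fin a) (Fin b) ℝ) :
    x ⬝ᵥ (C *ᵥ y) = ∑ i, ∑ j, C i j * (x i * y j) := by
  simp only [dotProduct, mulVec, Finset.mul_sum]
  exact Finset.sum_congr rfl fun i _ => Finset.sum_congr rfl fun j _ => by ring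

lemma integrable_quad (x : Ω → Fin a → ℝ) (y : Ω → Fin b → ℝ)
    (h : ∀ i j, Integrable fun ω => x ω i * y ω j) (C : Matrix (Fin a) (Fin b) ℝ) :
    Integrable fun ω => x ω ⬝ᵥ (C *ᵥ y ω) := by
  have hfun : (fun ω => x ω ⬝ᵥ (C *ᵥ y ω)) = fun ω => ∑ i, ∑ j, C i j * (x ω i * y ω j) := by
    funext ω; exact pointwise_quad _ _ _
  rw [hfun]
  exact integrable_finset_sum _ fun i _ =>
    integrable_finset_sum _ fun j _ => (h i j).const_mul _

lemma integral_quad (x : Ω → Fin a → ℝ) (y : Ω → Fin b → ℝ)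
    (h : ∀ i j, Integrable fun ω => x ω i * y ω j) (C : Matrix (Fin a) (Fin b) ℝ) :
    ∫ ω, x ω ⬝ᵥ (C *ᵥ y ω) = (secondMoment x y * Cᵀ).trace := by
  rw [show (fun ω => x ω ⬝ᵥ (C *ᵥ y ω)) = fun ω => ∑ i, ∑ j, C i j * (x ω i * y ω j) from
    funext fun ω => pointwise_quad _ _ _]
  rw [integral_finset_sum _ (fun i _ =>
    integrable_finset_sum _ fun j _ => (h i j).const_mul (C i j))]
  simp only [integral_finset_sum _ (fun j _ => ((h _ j).const_mul _))]
  simp only [integral_const_mul]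
  simp only [Matrix.trace, Matrix.mul_apply, Matrix.diag, secondMoment,
    Matrix.transpose_apply, Matrix.of_apply]
  exact Finset.sum_congr rfl fun i _ => Finset.sum_congr rfl fun j _ => by ring

lemma secondMoment_transpose (x : Ω → Fin a → ℝ) (y : Ω → Fin b → ℝ) :
    (secondMoment y x)ᵀ = secondMoment x y := by
  ext i j; simp [secondMoment, mul_comm]

lemma quad_comp {c d : ℕ} (x : Fin a → ℝ) (y : Fin b → ℝ)
    (P : Matrix (Fin c) (Fin a) ℝ) (C : Matrix (Fin c) (Fin d) ℝ) (Q : Matrix (Fin d) (Fin b) ℝ) :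
    (P *ᵥ x) ⬝ᵥ (C *ᵥ (Q *ᵥ y)) = x ⬝ᵥ ((Pᵀ * C * Q) *ᵥ y) := by
  rw [Matrix.mulVec_mulVec, ← Matrix.vecMul_transpose, ← dotProduct_mulVec,
    Matrix.mulVec_mulVec, ← Matrix.mul_assoc]

end helpers

/-- Theorem 2 of the paper: measurement-update covariance bound
`tr(P⁺ Z) ≤ tr(P⁻ (I − KH)ᵀ Z (I − KH)) + tr(K B_v R B_vᵀ Kᵀ Z) + tr(P⁻ Y)`. -/
theorem stmt_8 {Ω : Type*} [MeasureSpace Ω] [IsProbabilityMeasure (volume : Measure Ω)]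
    (n m p q : ℕ)
    (δx : Ω → Fin n → ℝ) (ρ : Ω → Fin m → ℝ) (v : Ω → Fin p → ℝ)
    (hxx : ∀ i j, Integrable fun ω => δx ω i * δx ω j)
    (hρρ : ∀ i j, Integrable fun ω => ρ ω i * ρ ω j)
    (hvv : ∀ i j, Integrable fun ω => v ω i * v ω j)
    (hxρ : ∀ i j, Integrable fun ω => δx ω i * ρ ω j)
    (hxv : ∀ i j, Integrable fun ω => δx ω i * v ω j)
    (hρv : ∀ i j, Integrable fun ω => ρ ω i * v ω j)
    (huncorr_vx : secondMoment v δx = 0)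
    (huncorr_vρ : secondMoment v ρ = 0)
    (R : Matrix (Fin p) (Fin p) ℝ) (hR : secondMoment v v = R)
    (H : Matrix (Fin q) (Fin n) ℝ) (K : Matrix (Fin n) (Fin q) ℝ)
    (Bρ : Matrix (Fin q) (Fin m) ℝ) (Bv : Matrix (Fin q) (Fin p) ℝ)
    (M : Matrix (Fin n ⊕ Fin m) (Fin n ⊕ Fin m) ℝ) (hM : M.IsSymm)
    (hQC : ∀ᵐ ω ∂(volume : Measure Ω),
      0 ≤ Sum.elim (δx ω) (ρ ω) ⬝ᵥ (M *ᵥ Sum.elim (δx ω) (ρ ω)))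
    (e : Ω → Fin n → ℝ)
    (he : ∀ ω, e ω = δx ω - K *ᵥ (H *ᵥ δx ω + Bρ *ᵥ ρ ω + Bv *ᵥ v ω))
    (Z Y : Matrix (Fin n) (Fin n) ℝ) (hZsym : Z.IsSymm) (hYsym : Y.IsSymm)
    (ξ : ℝ) (hξ : 0 ≤ ξ)
    (hLMI : (Matrix.fromBlocks (-Y) (Hᵀ * Kᵀ * Z * K * Bρ - Z * K * Bρ)
        (Hᵀ * Kᵀ * Z * K * Bρ - Z * K * Bρ)ᵀ (Bρᵀ * Kᵀ * Z * K * Bρ)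
        + ξ • M).NegSemidef') :
    (secondMoment e e * Z).trace ≤
      (secondMoment δx δx * ((1 - K * H)ᵀ * Z * (1 - K * H))).trace +
        (K * Bv * R * Bvᵀ * Kᵀ * Z).trace + (secondMoment δx δx * Y).trace := by
  have hZ : Zᵀ = Z := hZsym
  have hY : Yᵀ = Y := hYsym
  set A : Matrix (Fin n) (Fin n) ℝ := 1 - K * H with hAdef
  set G : Matrix (Fin n) (Fin m) ℝ := Hᵀ * Kᵀ * Z * K * Bρ - Z * K * Bρ with hGdef
  set D : Matrix (Fin m) (Fin m) ℝ := Bρᵀ * Kᵀ * Z * K * Bρ with hDdef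
  -- swapped integrability
  have hρx : ∀ i j, Integrable fun ω => ρ ω i * δx ω j := by
    intro i j
    have hf : (fun ω => ρ ω i * δx ω j) = fun ω => δx ω j * ρ ω i := by funext ω; ring
    rw [hf]; exact hxρ j i
  have hvx : ∀ i j, Integrable fun ω => v ω i * δx ω j := by
    intro i j
    have hf : (fun ω => v ω i * δx ω j) = fun ω => δx ω j * v ω i := by funext ω; ring
    rw [hf]; exact hxv j i
  have hvρ : ∀ i j, Integrable fun ω => v ω i * ρ ω j := by
    intro i j
    have hf : (fun ω => v ω i * ρ ω j) = fun ω => ρ ω j * v ω i := by funext ω; ring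
    rw [hf]; exact hρv j i
  -- matrix identities
  have hG1 : Aᵀ * Z * (K * Bρ) = -G := by
    rw [hAdef, hGdef]
    simp only [Matrix.transpose_sub, Matrix.transpose_mul, Matrix.transpose_one,
      Matrix.sub_mul, Matrix.one_mul, neg_sub, Matrix.mul_assoc]
  have hG2 : (K * Bρ)ᵀ * Z * A = -Gᵀ := by
    rw [hAdef, hGdef]
    simp only [Matrix.transpose_sub, Matrix.transpose_mul, Matrix.transpose_transpose, hZ,
      Matrix.mul_sub, Matrix.sub_mul, Matrix.mul_one, Matrix.one_mul, neg_sub, Matrix.mul_assoc]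
  have hDeq : (K * Bρ)ᵀ * Z * (K * Bρ) = D := by
    rw [hDdef]
    simp only [Matrix.transpose_mul, Matrix.mul_assoc]
  have hAZA : (Aᵀ * Z * A)ᵀ = Aᵀ * Z * A := by
    simp only [Matrix.transpose_mul, Matrix.transpose_transpose, hZ, Matrix.mul_assoc]
  have hC9 : ((K * Bv)ᵀ * Z * (K * Bv))ᵀ = (K * Bv)ᵀ * Z * (K * Bv) := by
    simp only [Matrix.transpose_mul, Matrix.transpose_transpose, hZ, Matrix.mul_assoc]
  -- e as matrix-vector form
  have heω : ∀ ω, e ω = A *ᵥ δx ω - (K * Bρ) *ᵥ ρ ω - (K * Bv) *ᵥ v ω := by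
    intro ω
    rw [he ω, hAdef]
    simp only [Matrix.mulVec_add, Matrix.mulVec_mulVec, Matrix.sub_mulVec, Matrix.one_mulVec]
    abel
  -- integrability of products of entries of e
  set sf : Ω → (Fin n ⊕ (Fin m ⊕ Fin p)) → ℝ :=
    fun ω => Sum.elim (δx ω) (Sum.elim (ρ ω) (v ω)) with hsf
  set cf : Fin n → (Fin n ⊕ (Fin m ⊕ Fin p)) → ℝ := fun i =>
    Sum.elim (fun k => A i k)
      (Sum.elim (fun k => -((K * Bρ) i k)) (fun k => -((K * Bv) i k))) with hcf
  have hs : ∀ k l, Integrable fun ω => sf ω k * sf ω l := by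
    rintro (k | k | k) (l | l | l) <;>
      simp only [hsf, Sum.elim_inl, Sum.elim_inr]
    · exact hxx k l
    · exact hxρ k l
    · exact hxv k l
    · exact hρx k l
    · exact hρρ k l
    · exact hρv k l
    · exact hvx k l
    · exact hvρ k l
    · exact hvv k l
  have he_entry : ∀ ω i, e ω i = ∑ k, cf i k * sf ω k := by
    intro ω i
    rw [heω ω]
    simp only [hsf, hcf, Fintype.sum_sum_type, Sum.elim_inl, Sum.elim_inr,
      Pi.sub_apply, Matrix.mulVec, dotProduct, neg_mul,
      Finset.sum_neg_distrib]
    ring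
  have he_int : ∀ i j, Integrable fun ω => e ω i * e ω j := by
    intro i j
    have hfun2 : (fun ω => e ω i * e ω j) =
        fun ω => ∑ k, ∑ l, (cf i k * cf j l) * (sf ω k * sf ω l) := by
      funext ω
      rw [he_entry ω i, he_entry ω j, Finset.sum_mul_sum]
      exact Finset.sum_congr rfl fun k _ => Finset.sum_congr rfl fun l _ => by ring
    rw [hfun2]
    exact integrable_finset_sum _ fun k _ =>
      integrable_finset_sum _ fun l _ => (hs k l).const_mul _
  -- LHS as an integral
  have hLe : ∫ ω, e ω ⬝ᵥ (Z *ᵥ e ω) = (secondMoment e e * Z).trace := by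
    rw [integral_quad e e he_int Z, hZ]
  -- pointwise split
  have hsplit : ∀ ω, e ω ⬝ᵥ (Z *ᵥ e ω) =
      ((δx ω ⬝ᵥ ((Aᵀ * Z * A) *ᵥ δx ω)
          + v ω ⬝ᵥ (((K * Bv)ᵀ * Z * (K * Bv)) *ᵥ v ω))
        + (δx ω ⬝ᵥ (G *ᵥ ρ ω) + ρ ω ⬝ᵥ (Gᵀ *ᵥ δx ω) + ρ ω ⬝ᵥ (D *ᵥ ρ ω)))
      + (((-(δx ω ⬝ᵥ ((Aᵀ * Z * (K * Bv)) *ᵥ v ω))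
          + ρ ω ⬝ᵥ (((K * Bρ)ᵀ * Z * (K * Bv)) *ᵥ v ω))
          - v ω ⬝ᵥ (((K * Bv)ᵀ * Z * A) *ᵥ δx ω))
          + v ω ⬝ᵥ (((K * Bv)ᵀ * Z * (K * Bρ)) *ᵥ ρ ω)) := by
    intro ω
    rw [heω ω]
    simp only [Matrix.mulVec_sub, sub_dotProduct, dotProduct_sub, quad_comp]
    rw [hG1, hG2, hDeq]
    simp only [Matrix.neg_mulVec, dotProduct_neg]
    ring
  -- integrability of each piece
  have i_t1 := integrable_quad δx δx hxx (Aᵀ * Z * A)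
  have i_t9 := integrable_quad v v hvv ((K * Bv)ᵀ * Z * (K * Bv))
  have i_q1 := integrable_quad δx ρ hxρ G
  have i_q2 := integrable_quad ρ δx hρx Gᵀ
  have i_q3 := integrable_quad ρ ρ hρρ D
  have i_c1 := integrable_quad δx v hxv (Aᵀ * Z * (K * Bv))
  have i_c2 := integrable_quad ρ v hρv ((K * Bρ)ᵀ * Z * (K * Bv))
  have i_c3 := integrable_quad v δx hvx ((K * Bv)ᵀ * Z * A)
  have i_c4 := integrable_quad v ρ hvρ ((K * Bv)ᵀ * Z * (K * Bρ))
  -- vanishing cross terms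
  have hSxv : secondMoment δx v = 0 := by
    rw [← secondMoment_transpose δx v, huncorr_vx, Matrix.transpose_zero]
  have hSρv : secondMoment ρ v = 0 := by
    rw [← secondMoment_transpose ρ v, huncorr_vρ, Matrix.transpose_zero]
  have z1 : ∫ ω, δx ω ⬝ᵥ ((Aᵀ * Z * (K * Bv)) *ᵥ v ω) = 0 := by
    rw [integral_quad δx v hxv, hSxv, Matrix.zero_mul, Matrix.trace_zero]
  have z2 : ∫ ω, ρ ω ⬝ᵥ (((K * Bρ)ᵀ * Z * (K * Bv)) *ᵥ v ω) = 0 := by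
    rw [integral_quad ρ v hρv, hSρv, Matrix.zero_mul, Matrix.trace_zero]
  have z3 : ∫ ω, v ω ⬝ᵥ (((K * Bv)ᵀ * Z * A) *ᵥ δx ω) = 0 := by
    rw [integral_quad v δx hvx, huncorr_vx, Matrix.zero_mul, Matrix.trace_zero]
  have z4 : ∫ ω, v ω ⬝ᵥ (((K * Bv)ᵀ * Z * (K * Bρ)) *ᵥ ρ ω) = 0 := by
    rw [integral_quad v ρ hvρ, huncorr_vρ, Matrix.zero_mul, Matrix.trace_zero]
  -- main trace terms
  have e_t1 : ∫ ω, δx ω ⬝ᵥ ((Aᵀ * Z * A) *ᵥ δx ω)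
      = (secondMoment δx δx * (Aᵀ * Z * A)).trace := by
    rw [integral_quad δx δx hxx, hAZA]
  have e_t9 : ∫ ω, v ω ⬝ᵥ (((K * Bv)ᵀ * Z * (K * Bv)) *ᵥ v ω)
      = (K * Bv * R * Bvᵀ * Kᵀ * Z).trace := by
    rw [integral_quad v v hvv, hC9, hR]
    rw [show R * ((K * Bv)ᵀ * Z * (K * Bv)) = (R * (K * Bv)ᵀ * Z) * (K * Bv) from by
      simp only [Matrix.mul_assoc]]
    rw [Matrix.trace_mul_comm]
    simp only [Matrix.transpose_mul, Matrix.mul_assoc]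
  -- LMI pointwise bound
  have hpsd : (-(Matrix.fromBlocks (-Y) G Gᵀ D + ξ • M)).PosSemidef := hLMI
  have hw : ∀ w : Fin n ⊕ Fin m → ℝ,
      w ⬝ᵥ ((Matrix.fromBlocks (-Y) G Gᵀ D + ξ • M) *ᵥ w) ≤ 0 := by
    intro w
    have h0 := hpsd.dotProduct_mulVec_nonneg w
    rw [Matrix.neg_mulVec, dotProduct_neg] at h0
    simp only [star_trivial] at h0
    linarith
  have hkey : ∀ᵐ ω ∂(volume : Measure Ω),
      δx ω ⬝ᵥ (G *ᵥ ρ ω) + ρ ω ⬝ᵥ (Gᵀ *ᵥ δx ω) + ρ ω ⬝ᵥ (D *ᵥ ρ ω)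
        ≤ δx ω ⬝ᵥ (Y *ᵥ δx ω) := by
    filter_upwards [hQC] with ω hω
    have h1 := hw (Sum.elim (δx ω) (ρ ω))
    rw [Matrix.add_mulVec, dotProduct_add, Matrix.fromBlocks_mulVec,
      sumElim_dotProduct_sumElim, dotProduct_add, dotProduct_add,
      Matrix.neg_mulVec, dotProduct_neg, Matrix.smul_mulVec,
      dotProduct_smul, smul_eq_mul] at h1
    simp only [Sum.elim_comp_inl, Sum.elim_comp_inr] at h1
    have h2 := mul_nonneg hξ hω
    linarith
  -- the q-part integral bound
  have e_q : ∫ ω, (δx ω ⬝ᵥ (G *ᵥ ρ ω) + ρ ω ⬝ᵥ (Gᵀ *ᵥ δx ω) + ρ ω ⬝ᵥ (D *ᵥ ρ ω))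
      ≤ (secondMoment δx δx * Y).trace := by
    have hYint : ∫ ω, δx ω ⬝ᵥ (Y *ᵥ δx ω) = (secondMoment δx δx * Y).trace := by
      rw [integral_quad δx δx hxx, hY]
    rw [← hYint]
    exact integral_mono_ae ((i_q1.add i_q2).add i_q3) (integrable_quad δx δx hxx Y) hkey
  -- assemble
  rw [← hLe]
  have hfun : (fun ω => e ω ⬝ᵥ (Z *ᵥ e ω)) = fun ω =>
      ((δx ω ⬝ᵥ ((Aᵀ * Z * A) *ᵥ δx ω)
          + v ω ⬝ᵥ (((K * Bv)ᵀ * Z * (K * Bv)) *ᵥ v ω))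
        + (δx ω ⬝ᵥ (G *ᵥ ρ ω) + ρ ω ⬝ᵥ (Gᵀ *ᵥ δx ω) + ρ ω ⬝ᵥ (D *ᵥ ρ ω)))
      + (((-(δx ω ⬝ᵥ ((Aᵀ * Z * (K * Bv)) *ᵥ v ω))
          + ρ ω ⬝ᵥ (((K * Bρ)ᵀ * Z * (K * Bv)) *ᵥ v ω))
          - v ω ⬝ᵥ (((K * Bv)ᵀ * Z * A) *ᵥ δx ω))
          + v ω ⬝ᵥ (((K * Bv)ᵀ * Z * (K * Bρ)) *ᵥ ρ ω)) := funext hsplit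
  rw [hfun]
  have iT : Integrable (fun ω => δx ω ⬝ᵥ ((Aᵀ * Z * A) *ᵥ δx ω)
      + v ω ⬝ᵥ (((K * Bv)ᵀ * Z * (K * Bv)) *ᵥ v ω)) := i_t1.add i_t9
  have iQ12 : Integrable (fun ω => δx ω ⬝ᵥ (G *ᵥ ρ ω) + ρ ω ⬝ᵥ (Gᵀ *ᵥ δx ω)) := i_q1.add i_q2
  have iQ : Integrable (fun ω => δx ω ⬝ᵥ (G *ᵥ ρ ω) + ρ ω ⬝ᵥ (Gᵀ *ᵥ δx ω)
      + ρ ω ⬝ᵥ (D *ᵥ ρ ω)) := iQ12.add i_q3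
  have iTQ : Integrable (fun ω => (δx ω ⬝ᵥ ((Aᵀ * Z * A) *ᵥ δx ω)
      + v ω ⬝ᵥ (((K * Bv)ᵀ * Z * (K * Bv)) *ᵥ v ω))
      + (δx ω ⬝ᵥ (G *ᵥ ρ ω) + ρ ω ⬝ᵥ (Gᵀ *ᵥ δx ω) + ρ ω ⬝ᵥ (D *ᵥ ρ ω))) := iT.add iQ
  have iC1n : Integrable (fun ω => -(δx ω ⬝ᵥ ((Aᵀ * Z * (K * Bv)) *ᵥ v ω))) := i_c1.neg
  have iC12 : Integrable (fun ω => -(δx ω ⬝ᵥ ((Aᵀ * Z * (K * Bv)) *ᵥ v ω))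
      + ρ ω ⬝ᵥ (((K * Bρ)ᵀ * Z * (K * Bv)) *ᵥ v ω)) := iC1n.add i_c2
  have iC123 : Integrable (fun ω => (-(δx ω ⬝ᵥ ((Aᵀ * Z * (K * Bv)) *ᵥ v ω))
      + ρ ω ⬝ᵥ (((K * Bρ)ᵀ * Z * (K * Bv)) *ᵥ v ω))
      - v ω ⬝ᵥ (((K * Bv)ᵀ * Z * A) *ᵥ δx ω)) := iC12.sub i_c3
  have iC : Integrable (fun ω => ((-(δx ω ⬝ᵥ ((Aᵀ * Z * (K * Bv)) *ᵥ v ω))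
      + ρ ω ⬝ᵥ (((K * Bρ)ᵀ * Z * (K * Bv)) *ᵥ v ω))
      - v ω ⬝ᵥ (((K * Bv)ᵀ * Z * A) *ᵥ δx ω))
      + v ω ⬝ᵥ (((K * Bv)ᵀ * Z * (K * Bρ)) *ᵥ ρ ω)) := iC123.add i_c4
  rw [integral_add iTQ iC, integral_add iT iQ, integral_add i_t1 i_t9,
    integral_add iC123 i_c4, integral_sub iC12 i_c3, integral_add iC1n i_c2,
    integral_neg]
  rw [z1, z2, z3, z4, e_t1, e_t9]
  linarith [e_q]
end
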